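/- Let r, q ∈ ℝ, E > 0, T > 0, let I ⊆ ℝ be an open interval, and let σ : I → ℝ be twice continuously differentiable. Suppose V : (0,∞) × (0,T) → ℝ has continuous partial derivatives ∂_t V, ∂_S V, ∂²_S V, ∂³_S V, ∂⁴_S V and continuous mixed partial ∂_t ∂²_S V, that S ∂²_S V(S,t) ∈ I for all (S,t), and that V satisfies the nonlinear Black–Scholes equation ∂_t V + (1/2) σ(S ∂²_S V)² S² ∂²_S V + (r−q) S ∂_S V − r V = 0 on (0,∞) × (0,T). Define H(x,τ) = E e^x · ∂²_S V(E e^x, T−τ) for x ∈ ℝ, τ ∈ (0,T), and β(h) = (1/2) σ(h)² h for h ∈ I. Then H satisfies the quasilinear parabolic equation ∂H/∂τ = ∂²/∂x² ( β(H) ) + ∂/∂x ( β(H) ) + (r−q) ∂H/∂x − q H on ℝ × (0,T). -/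

import Mathlib

open Filter Topology Metric

lemma clairaut_aux {U : Set (ℝ × ℝ)} (hU : IsOpen U) {p : ℝ × ℝ} (hp : p ∈ U)
    {f fa fb fab : ℝ → ℝ → ℝ}
    (hfa : ∀ z ∈ U, HasDerivAt (fun a => f a z.2) (fa z.1 z.2) z.1)
    (hfb : ∀ z ∈ U, HasDerivAt (fun b => f z.1 b) (fb z.1 z.2) z.2)
    (hfab : ∀ z ∈ U, HasDerivAt (fun a => fb a z.2) (fab z.1 z.2) z.1)
    (hcont : ContinuousAt (fun z : ℝ × ℝ => fab z.1 z.2) p) :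
    HasDerivAt (fun b => fa p.1 b) (fab p.1 p.2) p.2 := by
  obtain ⟨a₀, b₀⟩ := p
  set L := fab a₀ b₀ with hL
  rw [hasDerivAt_iff_tendsto_slope]
  rw [Metric.tendsto_nhdsWithin_nhds]
  intro ε hε
  obtain ⟨δ₁, hδ₁, hδ₁'⟩ := Metric.continuousAt_iff.mp hcont (ε/2) (by positivity)
  obtain ⟨δ₂, hδ₂, hδ₂'⟩ := Metric.isOpen_iff.mp hU _ hp
  refine ⟨min δ₁ δ₂, lt_min hδ₁ hδ₂, ?_⟩
  set δ := min δ₁ δ₂ with hδdef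
  have hδpos : 0 < δ := lt_min hδ₁ hδ₂
  intro b hb hbd
  rw [Set.mem_compl_iff, Set.mem_singleton_iff] at hb
  set k := b - b₀ with hk
  have hk0 : k ≠ 0 := sub_ne_zero.mpr hb
  have hkd : |k| < δ := by rwa [Real.dist_eq] at hbd
  have hmem : ∀ a y : ℝ, |a - a₀| < δ → |y - b₀| < δ → (a, y) ∈ U := by
    intro a y ha hy
    apply hδ₂'
    rw [Metric.mem_ball, Prod.dist_eq, Real.dist_eq, Real.dist_eq]
    exact max_lt (lt_of_lt_of_le ha (min_le_right _ _)) (lt_of_lt_of_le hy (min_le_right _ _))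
  have hnear : ∀ a y : ℝ, |a - a₀| < δ → |y - b₀| < δ → |fab a y - L| ≤ ε/2 := by
    intro a y ha hy
    have hd : dist (a, y) (a₀, b₀) < δ₁ := by
      rw [Prod.dist_eq, Real.dist_eq, Real.dist_eq]
      exact max_lt (lt_of_lt_of_le ha (min_le_left _ _)) (lt_of_lt_of_le hy (min_le_left _ _))
    have := hδ₁' hd
    rw [Real.dist_eq] at this
    exact le_of_lt this
  set Δ : ℝ → ℝ := fun h => f (a₀+h) (b₀+k) - f (a₀+h) b₀ - f a₀ (b₀+k) + f a₀ b₀ with hΔ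
  have key : ∀ h : ℝ, |h| < δ → |Δ h - L*h*k| ≤ ε/2 * |h| * |k| := by
    intro h hh
    have hyd : ∀ y ∈ Set.uIcc b₀ (b₀+k), |y - b₀| < δ := fun y hy =>
      lt_of_le_of_lt (by simpa using Set.abs_sub_left_of_mem_uIcc hy) hkd
    have had : ∀ a ∈ Set.uIcc a₀ (a₀+h), |a - a₀| < δ := fun a ha =>
      lt_of_le_of_lt (by simpa using Set.abs_sub_left_of_mem_uIcc ha) hh
    have inner : ∀ y : ℝ, |y - b₀| < δ → |fb (a₀+h) y - fb a₀ y - L*h| ≤ ε/2 * |h| := by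
      intro y hy
      have hψ : ∀ a ∈ Set.uIcc a₀ (a₀+h), HasDerivWithinAt (fun a => fb a y - L*a)
          (fab a y - L) (Set.uIcc a₀ (a₀+h)) a := by
        intro a ha
        have h1 := hfab (a, y) (hmem a y (had a ha) hy)
        have h2 : HasDerivAt (fun a : ℝ => L*a) L a := by
          simpa using (hasDerivAt_id a).const_mul L
        exact (h1.sub h2).hasDerivWithinAt
      have hbound : ∀ a ∈ Set.uIcc a₀ (a₀+h), ‖fab a y - L‖ ≤ ε/2 := fun a ha => by
        rw [Real.norm_eq_abs]; exact hnear a y (had a ha) hy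
      have := (convex_uIcc a₀ (a₀+h)).norm_image_sub_le_of_norm_hasDerivWithin_le hψ hbound
        Set.left_mem_uIcc Set.right_mem_uIcc
      rw [Real.norm_eq_abs, Real.norm_eq_abs] at this
      calc |fb (a₀+h) y - fb a₀ y - L*h|
          = |(fb (a₀+h) y - L*(a₀+h)) - (fb a₀ y - L*a₀)| := by ring_nf
        _ ≤ ε/2 * |a₀ + h - a₀| := this
        _ = ε/2 * |h| := by ring_nf
    set φ : ℝ → ℝ := fun y => f (a₀+h) y - f a₀ y - L*h*y with hφ
    have hφ' : ∀ y ∈ Set.uIcc b₀ (b₀+k), HasDerivWithinAt φ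
        (fb (a₀+h) y - fb a₀ y - L*h) (Set.uIcc b₀ (b₀+k)) y := by
      intro y hy
      have h1 := hfb (a₀+h, y) (hmem (a₀+h) y (by simpa using hh) (hyd y hy))
      have h2 := hfb (a₀, y) (hmem a₀ y (by simpa using hδpos) (hyd y hy))
      have h3 : HasDerivAt (fun y : ℝ => L*h*y) (L*h) y := by
        simpa using (hasDerivAt_id y).const_mul (L*h)
      exact ((h1.sub h2).sub h3).hasDerivWithinAt
    have hbound : ∀ y ∈ Set.uIcc b₀ (b₀+k), ‖fb (a₀+h) y - fb a₀ y - L*h‖ ≤ ε/2 * |h| :=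
      fun y hy => by rw [Real.norm_eq_abs]; exact inner y (hyd y hy)
    have := (convex_uIcc b₀ (b₀+k)).norm_image_sub_le_of_norm_hasDerivWithin_le hφ' hbound
      Set.left_mem_uIcc Set.right_mem_uIcc
    rw [Real.norm_eq_abs, Real.norm_eq_abs] at this
    calc |Δ h - L*h*k| = |φ (b₀+k) - φ b₀| := by simp only [hΔ, hφ]; ring_nf
      _ ≤ ε/2 * |h| * |b₀ + k - b₀| := this
      _ = ε/2 * |h| * |k| := by ring_nf
  -- limit as h → 0
  have hA1 := (hfa (a₀, b₀+k) (hmem a₀ (b₀+k) (by simpa using hδpos) (by simpa using hkd))).tendsto_slope_zero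
  have hA2 := (hfa (a₀, b₀) (hmem a₀ b₀ (by simpa using hδpos) (by simpa using hδpos))).tendsto_slope_zero
  set A := fa a₀ (b₀+k) - fa a₀ b₀ with hA
  have hAt : Tendsto (fun h => Δ h / h) (𝓝[≠] (0:ℝ)) (𝓝 A) := by
    refine (hA1.sub hA2).congr (fun h => ?_)
    simp only [hΔ, smul_eq_mul]
    ring
  have hfinal : Tendsto (fun h => |Δ h / h / k - L|) (𝓝[≠] (0:ℝ)) (𝓝 (|A/k - L|)) :=
    ((hAt.div_const k).sub_const L).abs
  have hbdd : ∀ᶠ h in 𝓝[≠] (0:ℝ), |Δ h / h / k - L| ≤ ε/2 := by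
    have hev : ∀ᶠ h in 𝓝 (0:ℝ), |h| < δ := by
      have := Metric.ball_mem_nhds (0:ℝ) hδpos
      filter_upwards [this] with h hh
      rwa [Metric.mem_ball, Real.dist_eq, sub_zero] at hh
    filter_upwards [self_mem_nhdsWithin, eventually_nhdsWithin_of_eventually_nhds hev]
      with h hh0 hhd
    rw [Set.mem_compl_iff, Set.mem_singleton_iff] at hh0
    have hhk : h * k ≠ 0 := mul_ne_zero hh0 hk0
    have : Δ h / h / k - L = (Δ h - L*h*k) / (h*k) := by
      field_simp
    rw [this, abs_div, abs_mul]
    rw [div_le_iff₀ (by positivity : (0:ℝ) < |h| * |k|)]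
    calc |Δ h - L*h*k| ≤ ε/2 * |h| * |k| := key h hhd
      _ = ε/2 * (|h| * |k|) := by ring
  have hle : |A/k - L| ≤ ε/2 := le_of_tendsto hfinal hbdd
  have : slope (fun b => fa a₀ b) b₀ b = A / k := by
    rw [slope_def_field, hA, hk]; congr 2; ring
  rw [Real.dist_eq, this]
  exact lt_of_le_of_lt hle (by linarith)



open Real

/-- equation (8) of the paper, Jandačka–Ševčovič transformation:
the change of variables H = S ∂²_S V, x = ln(S/E), τ = T−t converts the
nonlinear Black–Scholes equation with volatility σ(S ∂²_S V) into a
porous-media-type quasilinear parabolic equation with flux β(H) = σ(H)² H / 2. -/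
theorem gamma_transformation_quasilinear
    (r q E T : ℝ) (hE : 0 < E) (hT : 0 < T)
    (I : Set ℝ) (hI_open : IsOpen I) (hI_conn : I.OrdConnected)
    (σ : ℝ → ℝ) (hσ : ContDiffOn ℝ 2 σ I)
    (V Vt VS VSS VS3 VS4 VtSS : ℝ → ℝ → ℝ)
    -- existence of the partial derivatives on (0,∞) × (0,T)
    (hVt : ∀ S ∈ Set.Ioi (0 : ℝ), ∀ t ∈ Set.Ioo 0 T,
      HasDerivAt (fun t' => V S t') (Vt S t) t)
    (hVS : ∀ S ∈ Set.Ioi (0 : ℝ), ∀ t ∈ Set.Ioo 0 T,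
      HasDerivAt (fun S' => V S' t) (VS S t) S)
    (hVSS : ∀ S ∈ Set.Ioi (0 : ℝ), ∀ t ∈ Set.Ioo 0 T,
      HasDerivAt (fun S' => VS S' t) (VSS S t) S)
    (hVS3 : ∀ S ∈ Set.Ioi (0 : ℝ), ∀ t ∈ Set.Ioo 0 T,
      HasDerivAt (fun S' => VSS S' t) (VS3 S t) S)
    (hVS4 : ∀ S ∈ Set.Ioi (0 : ℝ), ∀ t ∈ Set.Ioo 0 T,
      HasDerivAt (fun S' => VS3 S' t) (VS4 S t) S)
    (hVtSS : ∀ S ∈ Set.Ioi (0 : ℝ), ∀ t ∈ Set.Ioo 0 T,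
      HasDerivAt (fun t' => VSS S t') (VtSS S t) t)
    -- continuity of the partial derivatives on (0,∞) × (0,T)
    (hVt_cont : ContinuousOn (fun p : ℝ × ℝ => Vt p.1 p.2)
      (Set.Ioi 0 ×ˢ Set.Ioo 0 T))
    (hVS_cont : ContinuousOn (fun p : ℝ × ℝ => VS p.1 p.2)
      (Set.Ioi 0 ×ˢ Set.Ioo 0 T))
    (hVSS_cont : ContinuousOn (fun p : ℝ × ℝ => VSS p.1 p.2)
      (Set.Ioi 0 ×ˢ Set.Ioo 0 T))
    (hVS3_cont : ContinuousOn (fun p : ℝ × ℝ => VS3 p.1 p.2)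
      (Set.Ioi 0 ×ˢ Set.Ioo 0 T))
    (hVS4_cont : ContinuousOn (fun p : ℝ × ℝ => VS4 p.1 p.2)
      (Set.Ioi 0 ×ˢ Set.Ioo 0 T))
    (hVtSS_cont : ContinuousOn (fun p : ℝ × ℝ => VtSS p.1 p.2)
      (Set.Ioi 0 ×ˢ Set.Ioo 0 T))
    -- S ∂²_S V stays in the domain I of σ
    (hmem : ∀ S ∈ Set.Ioi (0 : ℝ), ∀ t ∈ Set.Ioo 0 T, S * VSS S t ∈ I)
    -- the nonlinear Black–Scholes equation
    (hPDE : ∀ S ∈ Set.Ioi (0 : ℝ), ∀ t ∈ Set.Ioo 0 T,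
      Vt S t + 1 / 2 * (σ (S * VSS S t)) ^ 2 * S ^ 2 * VSS S t
          + (r - q) * S * VS S t - r * V S t = 0)
    (H : ℝ → ℝ → ℝ)
    (hH : ∀ x τ : ℝ, H x τ = E * Real.exp x * VSS (E * Real.exp x) (T - τ))
    (β : ℝ → ℝ) (hβ : ∀ h : ℝ, β h = 1 / 2 * (σ h) ^ 2 * h) :
    ∀ x : ℝ, ∀ τ ∈ Set.Ioo (0 : ℝ) T,
      deriv (fun τ' => H x τ') τ
        = deriv (fun y => deriv (fun z => β (H z τ)) y) x
          + deriv (fun y => β (H y τ)) x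
          + (r - q) * deriv (fun y => H y τ) x
          - q * H x τ := by
  set D : Set (ℝ × ℝ) := Set.Ioi 0 ×ˢ Set.Ioo 0 T with hDdef
  have hD_open : IsOpen D := isOpen_Ioi.prod isOpen_Ioo
  -- β is C² on I
  have hβfun : β = fun h => 1 / 2 * (σ h) ^ 2 * h := funext hβ
  have hβC2 : ContDiffOn ℝ 2 β I := by
    rw [hβfun]
    exact (contDiffOn_const.mul (hσ.pow 2)).mul contDiffOn_id
  set b1 : ℝ → ℝ := deriv β with hb1def
  set b2 : ℝ → ℝ := deriv b1 with hb2def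
  have hb1C1 : ContDiffOn ℝ 1 b1 I := hβC2.deriv_of_isOpen hI_open (by norm_num)
  have hβd : ∀ h ∈ I, HasDerivAt β (b1 h) h := by
    intro h hh
    exact (((hβC2.differentiableOn (by norm_num)).differentiableAt
      (hI_open.mem_nhds hh))).hasDerivAt
  have hb1d : ∀ h ∈ I, HasDerivAt b1 (b2 h) h := by
    intro h hh
    exact (((hb1C1.differentiableOn (by norm_num)).differentiableAt
      (hI_open.mem_nhds hh))).hasDerivAt
  have hβc : ContinuousOn β I := hβC2.continuousOn
  have hb1c : ContinuousOn b1 I := hb1C1.continuousOn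
  have hb2c : ContinuousOn b2 I := hb1C1.continuousOn_deriv_of_isOpen hI_open le_rfl
  -- derivative facts in S, at points of D
  have d1 : ∀ z ∈ D, HasDerivAt (fun S' => S' * VSS S' z.2)
      (VSS z.1 z.2 + z.1 * VS3 z.1 z.2) z.1 := by
    rintro ⟨S, t⟩ ⟨hS, ht⟩
    have h := (hasDerivAt_id S).mul (hVS3 S hS t ht)
    exact h.congr_deriv (by simp)
  have d2 : ∀ z ∈ D, HasDerivAt (fun S' => VSS S' z.2 + S' * VS3 S' z.2)
      (2 * VS3 z.1 z.2 + z.1 * VS4 z.1 z.2) z.1 := by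
    rintro ⟨S, t⟩ ⟨hS, ht⟩
    have h := (hVS3 S hS t ht).add ((hasDerivAt_id S).mul (hVS4 S hS t ht))
    exact h.congr_deriv (by simp only [id_eq, one_mul]; ring)
  have hmem' : ∀ z ∈ D, z.1 * VSS z.1 z.2 ∈ I := by
    rintro ⟨S, t⟩ ⟨hS, ht⟩; exact hmem S hS t ht
  have d3 : ∀ z ∈ D, HasDerivAt (fun S' => β (S' * VSS S' z.2))
      (b1 (z.1 * VSS z.1 z.2) * (VSS z.1 z.2 + z.1 * VS3 z.1 z.2)) z.1 := by
    intro z hz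
    exact (hβd _ (hmem' z hz)).comp z.1 (d1 z hz)
  have d4 : ∀ z ∈ D, HasDerivAt (fun S' => b1 (S' * VSS S' z.2))
      (b2 (z.1 * VSS z.1 z.2) * (VSS z.1 z.2 + z.1 * VS3 z.1 z.2)) z.1 := by
    intro z hz
    exact (hb1d _ (hmem' z hz)).comp z.1 (d1 z hz)
  
  -- G_S and G_SS: first and second S-derivatives of the RHS of the PDE solved for Vt
  set GS : ℝ → ℝ → ℝ := fun S t => r * VS S t - (r-q)*(VS S t + S*VSS S t)
      - (b1 (S*VSS S t)*(VSS S t + S*VS3 S t)*S + β (S*VSS S t)) with hGSdef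
  set GSS : ℝ → ℝ → ℝ := fun S t => r * VSS S t - (r-q)*(2*VSS S t + S*VS3 S t)
      - (b2 (S*VSS S t)*(VSS S t + S*VS3 S t)^2*S + b1 (S*VSS S t)*(2*VS3 S t + S*VS4 S t)*S
          + 2*b1 (S*VSS S t)*(VSS S t + S*VS3 S t)) with hGSSdef
  have d5 : ∀ z ∈ D, HasDerivAt (fun S' => Vt S' z.2) (GS z.1 z.2) z.1 := by
    rintro ⟨S, t⟩ ⟨hS, ht⟩
    have h1 := (hVS S hS t ht).const_mul r
    have h2 := ((hasDerivAt_id S).mul (hVSS S hS t ht)).const_mul (r-q)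
    have h3 := (d3 (S,t) ⟨hS,ht⟩).mul (hasDerivAt_id S)
    have hG : HasDerivAt (fun S' => r * V S' t - (r-q)*(S'*VS S' t)
        - β (S'*VSS S' t)*S') (GS S t) S := by
      exact ((h1.sub h2).sub h3).congr_deriv (by simp only [hGSdef, id_eq]; ring)
    refine hG.congr_of_eventuallyEq ?_
    filter_upwards [isOpen_Ioi.mem_nhds hS] with S' hS'
    have hp := hPDE S' hS' t ht
    have hb := hβ (S' * VSS S' t)
    rw [hb]
    linear_combination hp
  have d6 : ∀ z ∈ D, HasDerivAt (fun S' => GS S' z.2) (GSS z.1 z.2) z.1 := by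
    rintro ⟨S, t⟩ ⟨hS, ht⟩
    have h1 := (hVSS S hS t ht).const_mul r
    have h2 := ((hVSS S hS t ht).add ((hasDerivAt_id S).mul (hVS3 S hS t ht))).const_mul (r-q)
    have h3 := (((d4 (S,t) ⟨hS,ht⟩).mul (d2 (S,t) ⟨hS,ht⟩)).mul (hasDerivAt_id S)).add
      (d3 (S,t) ⟨hS,ht⟩)
    exact ((h1.sub h2).sub h3).congr_deriv (by simp only [hGSSdef, id_eq, Pi.mul_apply]; ring)
  -- continuity of GS and GSS on D
  have hfstc : ContinuousOn (fun p : ℝ × ℝ => p.1) D := continuous_fst.continuousOn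
  have hhhc : ContinuousOn (fun p : ℝ × ℝ => p.1 * VSS p.1 p.2) D := hfstc.mul hVSS_cont
  have hmaps : Set.MapsTo (fun p : ℝ × ℝ => p.1 * VSS p.1 p.2) D I := fun z hz => hmem' z hz
  have hb1hh : ContinuousOn (fun p : ℝ × ℝ => b1 (p.1 * VSS p.1 p.2)) D :=
    hb1c.comp hhhc hmaps
  have hb2hh : ContinuousOn (fun p : ℝ × ℝ => b2 (p.1 * VSS p.1 p.2)) D :=
    hb2c.comp hhhc hmaps
  have hβhh : ContinuousOn (fun p : ℝ × ℝ => β (p.1 * VSS p.1 p.2)) D :=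
    hβc.comp hhhc hmaps
  have hP_cont : ContinuousOn (fun p : ℝ × ℝ => VSS p.1 p.2 + p.1 * VS3 p.1 p.2) D :=
    hVSS_cont.add (hfstc.mul hVS3_cont)
  have hGS_cont : ContinuousOn (fun p : ℝ × ℝ => GS p.1 p.2) D := by
    simp only [hGSdef]
    exact ((continuousOn_const.mul hVS_cont).sub (continuousOn_const.mul (hVS_cont.add hhhc))).sub
      (((hb1hh.mul hP_cont).mul hfstc).add hβhh)
  have hGSS_cont : ContinuousOn (fun p : ℝ × ℝ => GSS p.1 p.2) D := by
    simp only [hGSSdef]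
    exact ((continuousOn_const.mul hVSS_cont).sub
        (continuousOn_const.mul ((continuousOn_const.mul hVSS_cont).add (hfstc.mul hVS3_cont)))).sub
      ((((hb2hh.mul (hP_cont.pow 2)).mul hfstc).add
        ((hb1hh.mul ((continuousOn_const.mul hVS3_cont).add (hfstc.mul hVS4_cont))).mul
          hfstc)).add ((continuousOn_const.mul hb1hh).mul hP_cont))
  -- Clairaut: swap mixed partials twice
  have hVtS : ∀ z ∈ D, HasDerivAt (fun t' => VS z.1 t') (GS z.1 z.2) z.2 := by
    intro z hz
    exact clairaut_aux hD_open hz (f := V) (fun w hw => hVS w.1 hw.1 w.2 hw.2)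
      (fun w hw => hVt w.1 hw.1 w.2 hw.2) d5 (hGS_cont.continuousAt (hD_open.mem_nhds hz))
  have hVtSS2 : ∀ z ∈ D, HasDerivAt (fun t' => VSS z.1 t') (GSS z.1 z.2) z.2 := by
    intro z hz
    exact clairaut_aux hD_open hz (f := VS) (fun w hw => hVSS w.1 hw.1 w.2 hw.2)
      hVtS d6 (hGSS_cont.continuousAt (hD_open.mem_nhds hz))
  have key : ∀ z ∈ D, VtSS z.1 z.2 = GSS z.1 z.2 := fun z hz =>
    (hVtSS z.1 hz.1 z.2 hz.2).unique (hVtSS2 z hz)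
  -- now the main computation
  intro x τ hτ
  have hSx : E * Real.exp x ∈ Set.Ioi (0:ℝ) := Set.mem_Ioi.mpr (by positivity)
  have ht : T - τ ∈ Set.Ioo (0:ℝ) T := ⟨by linarith [hτ.2], by linarith [hτ.1]⟩
  have hzD : ∀ y : ℝ, ((E*Real.exp y, T-τ) : ℝ × ℝ) ∈ D :=
    fun y => ⟨Set.mem_Ioi.mpr (by positivity), ht⟩
  have hSexp : ∀ y : ℝ, HasDerivAt (fun y' => E * Real.exp y') (E * Real.exp y) y :=
    fun y => (Real.hasDerivAt_exp y).const_mul E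
  -- τ derivative
  have hτd : HasDerivAt (fun τ' => H x τ')
      (E*Real.exp x * (VtSS (E*Real.exp x) (T-τ) * (-1))) τ := by
    have hinner : HasDerivAt (fun τ' : ℝ => T - τ') (-1) τ := by
      exact ((hasDerivAt_const τ T).sub (hasDerivAt_id' τ)).congr_deriv (by norm_num)
    have h2 := ((hVtSS _ hSx _ ht).comp τ hinner).const_mul (E*Real.exp x)
    exact h2.congr_of_eventuallyEq (Filter.Eventually.of_forall fun τ' => hH x τ')
  -- x derivatives
  have X1 : ∀ y : ℝ, HasDerivAt (fun z => H z τ)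
      ((VSS (E*Real.exp y) (T-τ) + (E*Real.exp y)*VS3 (E*Real.exp y) (T-τ)) * (E*Real.exp y)) y := by
    intro y
    have h2 := (d1 (E*Real.exp y, T-τ) (hzD y)).comp y (hSexp y)
    exact h2.congr_of_eventuallyEq (Filter.Eventually.of_forall fun z => hH z τ)
  have X2 : ∀ y : ℝ, HasDerivAt (fun z => β (H z τ))
      (b1 ((E*Real.exp y)*VSS (E*Real.exp y) (T-τ))
        * (VSS (E*Real.exp y) (T-τ) + (E*Real.exp y)*VS3 (E*Real.exp y) (T-τ))
        * (E*Real.exp y)) y := by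
    intro y
    have h2 := (d3 (E*Real.exp y, T-τ) (hzD y)).comp y (hSexp y)
    exact h2.congr_of_eventuallyEq (Filter.Eventually.of_forall fun z => congrArg β (hH z τ))
  have hΦeq : (fun y => deriv (fun z => β (H z τ)) y)
      = (fun y => b1 ((E*Real.exp y)*VSS (E*Real.exp y) (T-τ))
        * (VSS (E*Real.exp y) (T-τ) + (E*Real.exp y)*VS3 (E*Real.exp y) (T-τ))
        * (E*Real.exp y)) := funext fun y => (X2 y).deriv
  have X3 : HasDerivAt (fun y => b1 ((E*Real.exp y)*VSS (E*Real.exp y) (T-τ))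
        * (VSS (E*Real.exp y) (T-τ) + (E*Real.exp y)*VS3 (E*Real.exp y) (T-τ))
        * (E*Real.exp y))
      (((b2 ((E*Real.exp x)*VSS (E*Real.exp x) (T-τ))
            * (VSS (E*Real.exp x) (T-τ) + (E*Real.exp x)*VS3 (E*Real.exp x) (T-τ))
            * (VSS (E*Real.exp x) (T-τ) + (E*Real.exp x)*VS3 (E*Real.exp x) (T-τ))
          + b1 ((E*Real.exp x)*VSS (E*Real.exp x) (T-τ))
            * (2*VS3 (E*Real.exp x) (T-τ) + (E*Real.exp x)*VS4 (E*Real.exp x) (T-τ)))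
          * (E*Real.exp x)
        + b1 ((E*Real.exp x)*VSS (E*Real.exp x) (T-τ))
            * (VSS (E*Real.exp x) (T-τ) + (E*Real.exp x)*VS3 (E*Real.exp x) (T-τ)) * 1)
        * (E*Real.exp x)) x := by
    have hinner := ((d4 (E*Real.exp x, T-τ) (hzD x)).mul
      (d2 (E*Real.exp x, T-τ) (hzD x))).mul (hasDerivAt_id (E*Real.exp x))
    have h2 := hinner.comp x (hSexp x)
    exact h2.congr_of_eventuallyEq (Filter.Eventually.of_forall fun z => rfl)
  rw [hτd.deriv, hΦeq, X3.deriv, (X2 x).deriv, (X1 x).deriv, hH x τ,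
    key (E*Real.exp x, T-τ) ⟨hSx, ht⟩]
  simp only [hGSSdef]
  ring
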